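/- Let G be a virtually solvable group, i.e., G has a solvable subgroup of finite index, and let n ≥ 2. Then the natural action of Aut(F_n) on Hom(F_n, G) is not faithful: there exists an automorphism σ ≠ id of F_n such that x ∘ σ = x for every group homomorphism x : F_n → G. -/

import Mathlib

namespace AutNotFaithfulAux

open FreeGroup
open scoped commutatorElement

variable {α : Type*} [DecidableEq α]

/-- No cancellation between adjacent letters. -/
def NC (p q : α × Bool) : Prop := ¬(p.1 = q.1 ∧ p.2 = !q.2)

omit [DecidableEq α] in
lemma nc_of_ne {p q : α × Bool} (h : p.1 ≠ q.1) : NC p q := fun hc => h hc.1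

omit [DecidableEq α] in
lemma nc_of_bool_eq {p q : α × Bool} (h : p.2 = q.2) : NC p q := by
  rintro ⟨-, h2⟩
  rw [h] at h2
  simp at h2

lemma reduce_eq_self_of_chain' :
    ∀ {L : List (α × Bool)}, List.Chain' NC L → FreeGroup.reduce L = L
  | [], _ => rfl
  | [x], _ => rfl
  | x :: y :: L, h => by
    have h1 : NC x y := (List.isChain_cons_cons.mp h).1
    have h2 := reduce_eq_self_of_chain' (List.isChain_cons_cons.mp h).2
    rw [FreeGroup.reduce.cons, h2]
    exact if_neg h1

lemma chain'_of_reduce_eq_self :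
    ∀ {L : List (α × Bool)}, FreeGroup.reduce L = L → List.Chain' NC L
  | [], _ => List.isChain_nil
  | [x], _ => List.isChain_singleton x
  | x :: y :: L, h => by
    have hlen := FreeGroup.Red.length_le (FreeGroup.reduce.red (L := y :: L))
    rw [FreeGroup.reduce.cons] at h
    rcases hr : FreeGroup.reduce (y :: L) with _ | ⟨hd, tl⟩
    · rw [hr] at h
      simp at h
    · rw [hr] at h hlen
      change (if x.1 = hd.1 ∧ x.2 = !hd.2 then tl else x :: hd :: tl) = x :: y :: L at h
      by_cases hc : x.1 = hd.1 ∧ x.2 = !hd.2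
      · rw [if_pos hc] at h
        have := congrArg List.length h
        simp at this hlen
        omega
      · rw [if_neg hc] at h
        obtain ⟨-, h3, h4⟩ : x = x ∧ hd = y ∧ tl = L := by
          simpa using h
        subst h3; subst h4
        exact List.isChain_cons_cons.mpr ⟨hc, chain'_of_reduce_eq_self hr⟩

lemma toWord_mul_of_nc {u v : FreeGroup α} {p q : α × Bool}
    (hu : u.toWord.getLast? = some p) (hv : v.toWord.head? = some q) (h : NC p q) :
    (u * v).toWord = u.toWord ++ v.toWord := by
  conv_lhs => rw [← FreeGroup.mk_toWord (x := u), ← FreeGroup.mk_toWord (x := v)]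
  rw [FreeGroup.mul_mk, FreeGroup.toWord_mk]
  apply reduce_eq_self_of_chain'
  rw [show List.Chain' NC (u.toWord ++ v.toWord) = List.IsChain NC (u.toWord ++ v.toWord) from rfl,
    List.isChain_append]
  refine ⟨chain'_of_reduce_eq_self u.reduce_toWord,
    chain'_of_reduce_eq_self v.reduce_toWord, ?_⟩
  intro x hx y hy
  rw [Option.mem_def, hu, Option.some_inj] at hx
  rw [Option.mem_def, hv, Option.some_inj] at hy
  rw [← hx, ← hy]
  exact h

/-- Head and tail letters of the reduced word. -/
def HT (u : FreeGroup α) (p q : α × Bool) : Prop :=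
  u.toWord.head? = some p ∧ u.toWord.getLast? = some q

lemma HT.mul {u v : FreeGroup α} {p q r s : α × Bool}
    (hu : HT u p q) (hv : HT v r s) (h : NC q r) : HT (u * v) p s := by
  have e := toWord_mul_of_nc hu.2 hv.1 h
  constructor
  · rw [e, Option.mem_def.mp (List.mem_head?_append_of_mem_head? (Option.mem_def.mpr hu.1))]
  · rw [e, Option.mem_def.mp (List.mem_getLast?_append_of_mem_getLast? (Option.mem_def.mpr hv.2))]

lemma HT.inv {u : FreeGroup α} {p1 q1 : α} {p2 q2 : Bool} (hu : HT u (p1, p2) (q1, q2)) :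
    HT u⁻¹ (q1, !q2) (p1, !p2) := by
  constructor
  · rw [FreeGroup.toWord_inv, FreeGroup.invRev, List.head?_reverse, List.getLast?_map, hu.2]
    rfl
  · rw [FreeGroup.toWord_inv, FreeGroup.invRev, List.getLast?_reverse, List.head?_map, hu.1]
    rfl

lemma HT.of_pow (a : α) {k : ℕ} (hk : k ≠ 0) : HT (FreeGroup.of a ^ k) (a, true) (a, true) := by
  obtain ⟨k, rfl⟩ := Nat.exists_eq_succ_of_ne_zero hk
  constructor
  · rw [FreeGroup.toWord_of_pow, List.replicate_succ]
    rfl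
  · rw [FreeGroup.toWord_of_pow, List.replicate_succ', List.getLast?_concat]

variable {H : Type*} [Group H]

/-- The iterated commutator word. -/
def P : ℕ → H → H → H
  | 0, a, b => ⁅a, b⁆
  | d + 1, a, b => ⁅a * P d a b * a⁻¹, b * P d a b * b⁻¹⁆

lemma map_P {H' : Type*} [Group H'] (f : H →* H') (d : ℕ) (a b : H) :
    f (P d a b) = P d (f a) (f b) := by
  induction d with
  | zero => simp [P, commutatorElement_def]
  | succ d ih => simp [P, commutatorElement_def, ih]

lemma P_mem (d : ℕ) (a b : H) : P d a b ∈ derivedSeries H (d + 1) := by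
  induction d with
  | zero =>
    rw [derivedSeries_succ]
    exact Subgroup.commutator_mem_commutator (Subgroup.mem_top a) (Subgroup.mem_top b)
  | succ d ih =>
    rw [derivedSeries_succ]
    exact Subgroup.commutator_mem_commutator
      ((derivedSeries_normal _ _).conj_mem _ ih _)
      ((derivedSeries_normal _ _).conj_mem _ ih _)

lemma P_eq_one [Group.IsSolvable H] {m : ℕ} (hm : derivedSeries H m = ⊥) (a b : H) :
    P m a b = 1 := by
  have := P_mem m a b
  rw [derivedSeries_succ, hm, Subgroup.commutator_bot_left, Subgroup.mem_bot] at this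
  exact this

end AutNotFaithfulAux

open AutNotFaithfulAux FreeGroup
open scoped commutatorElement

/-- For a virtually solvable group `G` and `n ≥ 2`, the action of `Aut(Fₙ)` on
`Hom(Fₙ, G)` is not faithful. -/
theorem aut_action_not_faithful_of_virtually_solvable (G : Type*) [Group G]
    (hG : ∃ S : Subgroup G, IsSolvable S ∧ S.FiniteIndex) (n : ℕ) (hn : 2 ≤ n) :
    ∃ σ : MulAut (FreeGroup (Fin n)), σ ≠ 1 ∧
      ∀ x : FreeGroup (Fin n) →* G, x.comp σ.toMonoidHom = x := by
  obtain ⟨S, hS, hSfin⟩ := hG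
  haveI : Group.IsSolvable S := hS
  haveI := hSfin
  set N : Subgroup G := S.normalCore with hN
  haveI : N.FiniteIndex := S.finiteIndex_normalCore
  haveI : Group.IsSolvable N :=
    solvable_of_solvable_injective (Subgroup.inclusion_injective S.normalCore_le)
  obtain ⟨m, hm⟩ := (isSolvable_def N).mp ‹Group.IsSolvable N›
  set k : ℕ := N.index with hkdef
  have hk : k ≠ 0 := Subgroup.FiniteIndex.index_ne_zero
  have hn1 : 1 < n := hn
  set i0 : Fin n := ⟨0, by omega⟩
  set i1 : Fin n := ⟨1, by omega⟩
  have h01 : i0 ≠ i1 := by simp [i0, i1, Fin.ext_iff]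
  set a : FreeGroup (Fin n) := FreeGroup.of i0 ^ k with ha
  set b : FreeGroup (Fin n) := FreeGroup.of i1 ^ k with hb
  set w : FreeGroup (Fin n) := P m a b with hw
  -- `w` is a law for `G`
  have law : ∀ x : FreeGroup (Fin n) →* G, x w = 1 := by
    intro x
    rw [hw, map_P, ha, hb, map_pow, map_pow]
    have hga : (x (FreeGroup.of i0)) ^ k ∈ N := N.pow_index_mem _
    have hgb : (x (FreeGroup.of i1)) ^ k ∈ N := N.pow_index_mem _
    have key : P m (⟨_, hga⟩ : N) (⟨_, hgb⟩ : N) = 1 := P_eq_one hm _ _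
    have := congrArg N.subtype key
    rw [map_P, _root_.map_one] at this
    exact this
  -- head/tail structure of `w`
  have hta : HT a (i0, true) (i0, true) := HT.of_pow i0 hk
  have htb : HT b (i1, true) (i1, true) := HT.of_pow i1 hk
  have htP : ∀ d : ℕ, HT (P d a b) (i0, true) (i1, false) := by
    intro d
    induction d with
    | zero =>
      show HT ⁅a, b⁆ _ _
      rw [commutatorElement_def]
      exact ((hta.mul htb (nc_of_ne h01)).mul hta.inv (nc_of_ne h01.symm)).mul htb.inv
        (nc_of_ne h01)
    | succ d ih =>
      show HT ⁅a * P d a b * a⁻¹, b * P d a b * b⁻¹⁆ _ _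
      have hA : HT (a * P d a b * a⁻¹) (i0, true) (i0, false) :=
        (hta.mul ih (nc_of_bool_eq rfl)).mul hta.inv (nc_of_ne h01.symm)
      have hB : HT (b * P d a b * b⁻¹) (i1, true) (i1, false) :=
        (htb.mul ih (nc_of_ne h01.symm)).mul htb.inv (nc_of_bool_eq rfl)
      rw [commutatorElement_def]
      exact ((hA.mul hB (nc_of_ne h01)).mul hA.inv (nc_of_ne h01.symm)).mul hB.inv
        (nc_of_ne h01)
  have htw : HT w (i0, true) (i1, false) := htP m
  refine ⟨MulAut.conj w, ?_, ?_⟩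
  · intro hσ
    have hfix : w * FreeGroup.of i0 * w⁻¹ = FreeGroup.of i0 := by
      have := congrArg (fun σ : MulAut (FreeGroup (Fin n)) => σ (FreeGroup.of i0)) hσ
      simpa [MulAut.conj_apply] using this
    have htf : HT (w * FreeGroup.of i0 * w⁻¹) (i0, true) (i0, false) := by
      have hto : HT (FreeGroup.of i0) (i0, true) (i0, true) := by
        constructor <;> rw [FreeGroup.toWord_of] <;> rfl
      exact (htw.mul hto (nc_of_ne (by simpa using h01.symm))).mul htw.inv
        (nc_of_bool_eq rfl)
    rw [hfix] at htf
    have := htf.2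
    rw [FreeGroup.toWord_of] at this
    simp at this
  · intro x
    ext g
    simp only [MonoidHom.comp_apply, MulEquiv.coe_toMonoidHom, MulAut.conj_apply]
    rw [_root_.map_mul, _root_.map_mul, _root_.map_inv, law x, one_mul, inv_one, mul_one]
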